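/- Let V be a complex vector space, let T : V → V be a ℂ-linear map, and let C : V → V be an additive map which is conjugate-linear (C(z·v) = z̄·C(v) for all z ∈ ℂ, v ∈ V) and satisfies C(C(v)) = −v for all v ∈ V and T(C(v)) = C(T(v)) for all v ∈ V. Then for every real number μ, if the eigenspace {v ∈ V : T(v) = μ·v} is finite-dimensional, its complex dimension is even. -/
import Mathlib

universe u

private theorem antilinear_even_aux (n : ℕ) :
    ∀ {W : Type u} [AddCommGroup W] [Module ℂ W] (C : W → W),
    (∀ u v : W, C (u + v) = C u + C v) →
    (∀ (z : ℂ) (v : W), C (z • v) = (starRingEnd ℂ z) • C v) →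
    (∀ v : W, C (C v) = -v) →
    FiniteDimensional ℂ W → Module.finrank ℂ W = n → Even n := by
  induction n using Nat.strong_induction_on with
  | _ n ih =>
    intro W _ _ C hadd hconj hCC hfd hrank
    rcases Nat.eq_zero_or_pos n with h0 | hpos
    · simp [h0]
    -- C 0 = 0
    have hC0 : C 0 = 0 := by
      have := hadd 0 0
      simp at this
      linear_combination (norm := abel) this
    -- pick a nonzero vector
    have : Nontrivial W := by
      rw [← Module.finrank_pos_iff (R := ℂ)]; omega
    obtain ⟨v, hv⟩ := exists_ne (0 : W)
    -- v and C v are linearly independent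
    have hindep : LinearIndependent ℂ ![v, C v] := by
      rw [LinearIndependent.pair_iff]
      intro s t hst
      by_cases ht : t = 0
      · subst ht
        simp at hst
        rcases hst with h | h
        · exact ⟨h, rfl⟩
        · exact absurd h hv
      · exfalso
        have hCv : C v = (-s / t) • v := by
          have : t • C v = -s • v := by
            have := hst
            rw [add_comm] at this
            have h' : t • C v = -(s • v) := by
              linear_combination (norm := abel) this
            rw [h', neg_smul]
          have := congrArg (fun x => t⁻¹ • x) this
          simpa [smul_smul, inv_mul_cancel₀ ht, div_eq_mul_inv, mul_comm] using this
        have h2 := hCC v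
        rw [hCv, hconj] at h2
        rw [hCv] at h2
        rw [smul_smul] at h2
        have hcoef : (starRingEnd ℂ) (-s / t) * (-s / t) + 1 = 0 := by
          by_contra hc
          have : ((starRingEnd ℂ) (-s / t) * (-s / t) + 1) • v = 0 := by
            rw [add_smul, one_smul, h2]; abel
          exact hv ((smul_eq_zero.mp this).resolve_left hc)
        have := Complex.normSq_eq_conj_mul_self (z := -s / t)
        rw [← this] at hcoef
        have hns : (Complex.normSq (-s / t) : ℂ) + 1 = 0 := hcoef
        have : (Complex.normSq (-s / t) : ℝ) + 1 = 0 := by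
          exact_mod_cast hns
        nlinarith [Complex.normSq_nonneg (-s / t)]
    -- the span of {v, C v}
    set W' : Submodule ℂ W := Submodule.span ℂ {v, C v} with hW'
    have hrange : Set.range ![v, C v] = {v, C v} := by
      simp [Set.range_subset_iff]
      ext x; simp [Fin.exists_fin_two]; tauto
    have hW'rank : Module.finrank ℂ W' = 2 := by
      have := finrank_span_eq_card (R := ℂ) hindep
      rw [hrange] at this
      simpa using this
    -- W' is C-invariant
    have hCinv : ∀ x ∈ W', C x ∈ W' := by
      intro x hx
      induction hx using Submodule.span_induction with
      | mem y hy =>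
        rcases hy with h | h
        · subst h; exact Submodule.subset_span (by simp)
        · simp only [Set.mem_singleton_iff] at h
          subst h
          rw [hCC]
          exact Submodule.neg_mem _ (Submodule.subset_span (by simp))
      | zero => rw [hC0]; exact Submodule.zero_mem _
      | add a b _ _ ha hb => rw [hadd]; exact Submodule.add_mem _ ha hb
      | smul z a _ ha => rw [hconj]; exact Submodule.smul_mem _ _ ha
    -- quotient
    have hCneg : ∀ x : W, C (-x) = -C x := by
      intro x
      have h := hadd x (-x)
      rw [add_neg_cancel, hC0] at h
      exact eq_neg_of_add_eq_zero_right h.symm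
    let Q := W ⧸ W'
    let CQ : Q → Q := fun q => Quotient.liftOn' q
      (fun x => Submodule.Quotient.mk (C x))
      (by
        intro a b hab
        have hab' : a - b ∈ W' := (Submodule.quotientRel_def W').mp hab
        apply (Submodule.Quotient.eq W').mpr
        have : C (a - b) ∈ W' := hCinv _ hab'
        rwa [sub_eq_add_neg, hadd, hCneg, ← sub_eq_add_neg] at this)
    have hCQmk : ∀ x : W, CQ (Submodule.Quotient.mk x) = Submodule.Quotient.mk (C x) :=
      fun _ => rfl
    have hsurj := Submodule.Quotient.mk_surjective W'
    have hQadd : ∀ u v : Q, CQ (u + v) = CQ u + CQ v := by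
      intro u w
      obtain ⟨a, rfl⟩ := hsurj u
      obtain ⟨b, rfl⟩ := hsurj w
      rw [← Submodule.Quotient.mk_add, hCQmk, hCQmk, hCQmk, hadd, Submodule.Quotient.mk_add]
    have hQconj : ∀ (z : ℂ) (q : Q), CQ (z • q) = (starRingEnd ℂ z) • CQ q := by
      intro z q
      obtain ⟨a, rfl⟩ := hsurj q
      rw [← Submodule.Quotient.mk_smul, hCQmk, hCQmk, hconj, Submodule.Quotient.mk_smul]
    have hQCC : ∀ q : Q, CQ (CQ q) = -q := by
      intro q
      obtain ⟨a, rfl⟩ := hsurj q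
      rw [hCQmk, hCQmk, hCC, Submodule.Quotient.mk_neg]
    have hQfd : FiniteDimensional ℂ Q := by infer_instance
    have hsum := Submodule.finrank_quotient_add_finrank W'
    rw [hW'rank, hrank] at hsum
    have hle : 2 ≤ n := by
      have := Submodule.finrank_le W'
      omega
    have hQrank : Module.finrank ℂ Q = n - 2 := by
      show Module.finrank ℂ (W ⧸ W') = n - 2
      omega
    have heven := ih (n - 2) (by omega) CQ hQadd hQconj hQCC hQfd hQrank
    rcases heven with ⟨k, hk⟩
    exact ⟨k + 1, by omega⟩

/-- If `C` is an antilinear map on a complex vector space satisfying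
`C∘C = -id` and commuting with a linear map `T`, then every finite-dimensional eigenspace
of `T` corresponding to a real eigenvalue has even complex dimension. -/
theorem even_multiplicity_of_real_eigenvalues
    {V : Type*} [AddCommGroup V] [Module ℂ V]
    (T : V →ₗ[ℂ] V) (C : V → V)
    (hadd : ∀ u v : V, C (u + v) = C u + C v)
    (hconj : ∀ (z : ℂ) (v : V), C (z • v) = (starRingEnd ℂ z) • C v)
    (hCC : ∀ v : V, C (C v) = -v)
    (hTC : ∀ v : V, T (C v) = C (T v))
    (μ : ℝ)
    (hfd : FiniteDimensional ℂ (Module.End.eigenspace T (μ : ℂ))) :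
    Even (Module.finrank ℂ (Module.End.eigenspace T (μ : ℂ))) := by
  set E := Module.End.eigenspace T (μ : ℂ) with hE
  have hmem : ∀ x : V, x ∈ E ↔ T x = (μ : ℂ) • x := by
    intro x; exact Module.End.mem_eigenspace_iff
  have hCE : ∀ x : V, x ∈ E → C x ∈ E := by
    intro x hx
    rw [hmem] at hx ⊢
    rw [hTC, hx, hconj]
    simp [Complex.conj_ofReal]
  let C' : E → E := fun x => ⟨C x, hCE x x.2⟩
  apply antilinear_even_aux (Module.finrank ℂ E) C'
  · intro u v
    apply Subtype.ext
    exact hadd u v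
  · intro z v
    apply Subtype.ext
    exact hconj z v
  · intro v
    apply Subtype.ext
    exact hCC v
  · exact hfd
  · rfl
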